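/- Let B be a band with linearly ordered structure semilattice, let α > β in the structure semilattice, e_α ∈ B_α, and suppose B_β(e_α) = {x ∈ B_β : x < e_α} intersects more than one L-class of B_β. If B is homogeneous, then every g_β ∈ B_β with e_α g_β = g_β (i.e., g_β ≤_r e_α) satisfies g_β < e_α. -/

import Mathlib

/-- A band is homogeneous if every isomorphism between finite subsemigroups
extends to an automorphism. -/
def IsHomogeneous (B : Type*) [Semigroup B] : Prop :=
  ∀ (A₁ A₂ : Subsemigroup B), (A₁ : Set B).Finite → (A₂ : Set B).Finite →
    ∀ θ : A₁ ≃* A₂, ∃ Θ : B ≃* B, ∀ a : A₁, Θ (a : B) = (θ a : B)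

namespace Stmt16Aux

variable {B : Type*} [Semigroup B]

lemma sa_lem (hband : ∀ x : B, x * x = x) {P Q a : B} (ha : a = P * Q) :
    a * Q * a = a := by
  have h1 : a * Q = P * Q := by rw [ha, mul_assoc, hband]
  calc a * Q * a = (P * Q) * a := by rw [h1]
    _ = a * a := by rw [← ha]
    _ = a := hband a

lemma fb_lem (hband : ∀ x : B, x * x = x) {X c Y a : B} (ha : a = X * c * Y) :
    a * c * a = a := by
  have ha' : a = X * (c * Y) := by rw [← mul_assoc]; exact ha
  have h1 : a * (c * Y) * a = a := sa_lem hband ha'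
  calc a * c * a = a * c * (a * (c * Y) * a) := by rw [h1]
    _ = (a * c) * (a * c) * (Y * a) := by simp only [mul_assoc]
    _ = (a * c) * (Y * a) := by rw [hband (a * c)]
    _ = a * (c * Y) * a := by simp only [mul_assoc]
    _ = a := h1

lemma swap2 (hhom : IsHomogeneous B) {p q : B} (hpq : p ≠ q)
    (rz : ∀ a ∈ ({p, q} : Set B), ∀ c ∈ ({p, q} : Set B), a * c = c) :
    ∃ Θ : B ≃* B, Θ p = q ∧ Θ q = p := by
  classical
  let S : Subsemigroup B :=
    { carrier := {p, q}
      mul_mem' := fun {a c} ha hc => by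
        have h := rz a ha c hc
        rw [h]; exact hc }
  have hpS : p ∈ S := Set.mem_insert _ _
  have hqS : q ∈ S := Set.mem_insert_of_mem _ rfl
  have key : ∀ a c : S, a * c = c := fun a c => Subtype.ext (rz a a.2 c c.2)
  let φ : S → S := fun a => if (a : B) = p then ⟨q, hqS⟩ else ⟨p, hpS⟩
  have hφp : ∀ hh : p ∈ S, φ ⟨p, hh⟩ = ⟨q, hqS⟩ := fun _ => if_pos rfl
  have hφq : ∀ hh : q ∈ S, φ ⟨q, hh⟩ = ⟨p, hpS⟩ :=
    fun _ => if_neg (fun hh2 => hpq hh2.symm)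
  have hinv : Function.Involutive φ := by
    rintro ⟨a, ha⟩
    rcases ha with rfl | ha
    · exact (congrArg φ (hφp _)).trans (hφq _)
    · rcases ha with rfl
      exact (congrArg φ (hφq _)).trans (hφp _)
  let θ : S ≃* S :=
    { toFun := φ
      invFun := φ
      left_inv := hinv.leftInverse
      right_inv := hinv.rightInverse
      map_mul' := fun a c => by rw [key a c, key (φ a) (φ c)] }
  have hfin : (S : Set B).Finite := (Set.finite_singleton q).insert p
  obtain ⟨Θ, hΘ⟩ := hhom S S hfin hfin θ
  refine ⟨Θ, ?_, ?_⟩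
  · have h := hΘ ⟨p, hpS⟩
    have e1 : θ ⟨p, hpS⟩ = ⟨q, hqS⟩ := hφp hpS
    rw [e1] at h
    exact h
  · have h := hΘ ⟨q, hqS⟩
    have e1 : θ ⟨q, hqS⟩ = ⟨p, hpS⟩ := hφq hqS
    rw [e1] at h
    exact h

lemma swap3 (hhom : IsHomogeneous B) {p q r : B} (hpq : p ≠ q) (hpr : p ≠ r)
    (hqr : q ≠ r)
    (rz : ∀ a ∈ ({p, q, r} : Set B), ∀ c ∈ ({p, q, r} : Set B), a * c = c) :
    ∃ Θ : B ≃* B, Θ p = r ∧ Θ r = p ∧ Θ q = q := by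
  classical
  let S : Subsemigroup B :=
    { carrier := {p, q, r}
      mul_mem' := fun {a c} ha hc => by
        have h := rz a ha c hc
        rw [h]; exact hc }
  have hpS : p ∈ S := Set.mem_insert _ _
  have hqS : q ∈ S := Set.mem_insert_of_mem _ (Set.mem_insert _ _)
  have hrS : r ∈ S := Set.mem_insert_of_mem _ (Set.mem_insert_of_mem _ rfl)
  have key : ∀ a c : S, a * c = c := fun a c => Subtype.ext (rz a a.2 c c.2)
  let φ : S → S := fun a =>
    if (a : B) = p then ⟨r, hrS⟩ else if (a : B) = r then ⟨p, hpS⟩ else a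
  have hφp : ∀ hh : p ∈ S, φ ⟨p, hh⟩ = ⟨r, hrS⟩ := fun _ => if_pos rfl
  have hφr : ∀ hh : r ∈ S, φ ⟨r, hh⟩ = ⟨p, hpS⟩ :=
    fun _ => (if_neg (fun hh2 => hpr hh2.symm)).trans (if_pos rfl)
  have hφq : ∀ hh : q ∈ S, φ ⟨q, hh⟩ = ⟨q, hh⟩ :=
    fun _ => (if_neg (fun hh2 => hpq hh2.symm)).trans (if_neg hqr)
  have hinv : Function.Involutive φ := by
    rintro ⟨a, ha⟩
    rcases ha with rfl | ha
    · exact (congrArg φ (hφp _)).trans (hφr _)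
    · rcases ha with rfl | ha
      · exact (congrArg φ (hφq _)).trans (hφq _)
      · rcases ha with rfl
        exact (congrArg φ (hφr _)).trans (hφp _)
  let θ : S ≃* S :=
    { toFun := φ
      invFun := φ
      left_inv := hinv.leftInverse
      right_inv := hinv.rightInverse
      map_mul' := fun a c => by rw [key a c, key (φ a) (φ c)] }
  have hfin : (S : Set B).Finite :=
    (((Set.finite_singleton r).insert q).insert p)
  obtain ⟨Θ, hΘ⟩ := hhom S S hfin hfin θ
  refine ⟨Θ, ?_, ?_, ?_⟩
  · have h := hΘ ⟨p, hpS⟩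
    have e1 : θ ⟨p, hpS⟩ = ⟨r, hrS⟩ := hφp hpS
    rw [e1] at h
    exact h
  · have h := hΘ ⟨r, hrS⟩
    have e1 : θ ⟨r, hrS⟩ = ⟨p, hpS⟩ := hφr hrS
    rw [e1] at h
    exact h
  · have h := hΘ ⟨q, hqS⟩
    have e1 : θ ⟨q, hqS⟩ = ⟨q, hqS⟩ := hφq hqS
    rw [e1] at h
    exact h

end Stmt16Aux

/-- In a homogeneous linearly ordered band, if `B_β(e_α)` meets more than one
`L`-class, then every `g_β` with `g_β ≤_r e_α` satisfies `g_β < e_α`.  Here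
`b` represents the `D`-class `β` (strictly below the class of `e`), the
linearity of the structure semilattice is `∀ x y, x*y*x = x ∨ y*x*y = y`. -/
theorem stmt_16 {B : Type*} [Semigroup B] (hband : ∀ x : B, x * x = x)
    (hlin : ∀ x y : B, x * y * x = x ∨ y * x * y = y)
    (hhom : IsHomogeneous B)
    (e b : B)
    (hlt : b * e * b = b ∧ ¬ e * b * e = e)
    (hL : ∃ x y : B,
      (x * b * x = x ∧ b * x * b = b) ∧ (y * b * y = y ∧ b * y * b = b) ∧
      (x * e = x ∧ e * x = x) ∧ (y * e = y ∧ e * y = y) ∧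
      ¬ (x * y = x ∧ y * x = y)) :
    ∀ g : B, (g * b * g = g ∧ b * g * b = b) → e * g = g →
      (g * e = g ∧ g ≠ e) := by
  obtain ⟨hbeb, hebe⟩ := hlt
  obtain ⟨x, y, ⟨hxbx, hbxb⟩, ⟨hyby, hbyb⟩, ⟨hxe, hex⟩, ⟨hye, hey⟩, hnotL⟩ := hL
  intro g hg heg
  obtain ⟨hgbg, hbgb⟩ := hg
  have hne : g ≠ e := by
    intro hh
    rw [hh] at hgbg
    exact hebe hgbg
  refine ⟨?_, hne⟩
  by_contra hge
  -- u := g * e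
  set u := g * e with hu
  -- basic facts about u
  have f_ue : u * e = u := by rw [hu, mul_assoc, hband]
  have f_gu : g * u = u := by rw [hu, ← mul_assoc, hband]
  have f_ug : u * g = g := by rw [hu, mul_assoc, heg, hband]
  have f_ubu : u * b * u = u :=
    Stmt16Aux.fb_lem hband (show u = g * b * u by rw [hu, ← mul_assoc, hgbg])
  have f_bub : b * u * b = b :=
    Stmt16Aux.fb_lem hband
      (show b = b * u * (g * b) by
        rw [← mul_assoc, mul_assoc b u g, f_ug, hbgb])
  have f_uzu : ∀ z : B, b * z * b = b → u * z * u = u := fun z hbz =>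
    Stmt16Aux.fb_lem hband
      (show u = u * b * z * (b * u) by
        rw [← mul_assoc, mul_assoc u b z, mul_assoc u (b * z) b, hbz, f_ubu])
  have f_gzg : ∀ z : B, b * z * b = b → g * z * g = g := fun z hbz =>
    Stmt16Aux.fb_lem hband
      (show g = g * b * z * (b * g) by
        rw [← mul_assoc, mul_assoc g b z, mul_assoc g (b * z) b, hbz, hgbg])
  have f_zuz : ∀ z : B, z * b * z = z → z * u * z = z := fun z hz =>
    Stmt16Aux.fb_lem hband
      (show z = z * b * u * (b * z) by
        rw [← mul_assoc, mul_assoc z b u, mul_assoc z (b * u) b, f_bub, hz])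
  have hg_ne_u : g ≠ u := fun hh => hge hh.symm
  -- the key claim: every element of the D-class of b lying below e is
  -- "right-fixed" by u
  have key : ∀ z : B, z * b * z = z → b * z * b = b → z * e = z → e * z = z →
      u * z = u := by
    intro z hzbz hbzb hze hez
    by_contra hvu
    set v := u * z with hv
    have f_ve : v * e = v := by rw [hv, mul_assoc, hze]
    have f_gv : g * v = v := by rw [hv, ← mul_assoc, f_gu]
    have f_uv : u * v = v := by rw [hv, ← mul_assoc, hband]
    have f_vu : v * u = u := by rw [hv]; exact f_uzu z hbzb
    have f_vg : v * g = g := by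
      rw [hv, hu, mul_assoc g e z, hez]
      exact f_gzg z hbzb
    have hg_ne_v : g ≠ v := by
      intro hh
      have h1 : u = v := by rw [hu, hh, f_ve]
      exact hvu h1.symm
    have hu_ne_v : u ≠ v := fun hh => hvu hh.symm
    have rz3 : ∀ a ∈ ({g, u, v} : Set B), ∀ c ∈ ({g, u, v} : Set B),
        a * c = c := by
      intro a ha c hc
      simp only [Set.mem_insert_iff, Set.mem_singleton_iff] at ha hc
      rcases ha with ha | ha | ha <;> rcases hc with hc | hc | hc <;>
        rw [ha, hc]
      exacts [hband g, f_gu, f_gv, f_ug, hband u, f_uv, f_vg, f_vu, hband v]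
    obtain ⟨Θ₁, hΘg, hΘv, hΘu⟩ :=
      Stmt16Aux.swap3 hhom hg_ne_u hg_ne_v hu_ne_v rz3
    set f := Θ₁ e with hf
    have f_uf : u * f = u := by
      have h := map_mul Θ₁ u e
      rw [f_ue, hΘu, ← hf] at h
      exact h.symm
    have f_gf : g * f = g := by
      have h := map_mul Θ₁ v e
      rw [f_ve, hΘv, ← hf] at h
      exact h.symm
    have f_vf : v * f = u := by
      have h := map_mul Θ₁ g e
      rw [← hu, hΘu, hΘg, ← hf] at h
      exact h.symm
    rcases hlin e f with hefe | hfef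
    · -- case e * f * e = e
      set w := e * f with hw
      have f_ew : e * w = w := by rw [hw, ← mul_assoc, hband]
      have f_uw : u * w = u := by rw [hw, ← mul_assoc, f_ue, f_uf]
      have f_vw : v * w = u := by rw [hw, ← mul_assoc, f_ve, f_vf]
      have he_ne_w : e ≠ w := by
        intro hh
        have h1 : v * e = u := by rw [hh]; exact f_vw
        rw [f_ve] at h1
        exact hvu h1
      have rz2 : ∀ a ∈ ({e, w} : Set B), ∀ c ∈ ({e, w} : Set B),
          a * c = c := by
        intro a ha c hc
        simp only [Set.mem_insert_iff, Set.mem_singleton_iff] at ha hc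
        rcases ha with ha | ha <;> rcases hc with hc | hc <;> rw [ha, hc]
        exacts [hband e, f_ew, hefe, hband w]
      obtain ⟨Θ₂, hΘe, hΘw⟩ := Stmt16Aux.swap2 hhom he_ne_w rz2
      have c1 : Θ₂ u * w = Θ₂ u := by
        have h := map_mul Θ₂ u e
        rw [f_ue, hΘe] at h
        exact h.symm
      have c2 : Θ₂ u * e = Θ₂ u := by
        have h := map_mul Θ₂ u w
        rw [f_uw, hΘw] at h
        exact h.symm
      have c3 : Θ₂ v * e = Θ₂ u := by
        have h := map_mul Θ₂ v w
        rw [f_vw, hΘw] at h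
        exact h.symm
      have c4 : Θ₂ v * w = Θ₂ v := by
        have h := map_mul Θ₂ v e
        rw [f_ve, hΘe] at h
        exact h.symm
      have d1 : Θ₂ u * f = Θ₂ u := by
        have h := c1
        rw [hw, ← mul_assoc, c2] at h
        exact h
      have d2 : Θ₂ v = Θ₂ u := by
        have h := c4
        rw [hw, ← mul_assoc, c3, d1] at h
        exact h.symm
      exact hvu (Θ₂.injective d2)
    · -- case f * e * f = f
      set w := f * e with hw
      have f_fw : f * w = w := by rw [hw, ← mul_assoc, hband]
      have f_uw : u * w = u := by rw [hw, ← mul_assoc, f_uf, f_ue]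
      have f_gw : g * w = u := by rw [hw, ← mul_assoc, f_gf, ← hu]
      have hf_ne_w : f ≠ w := by
        intro hh
        have h1 : g * f = u := by rw [hh]; exact f_gw
        rw [f_gf] at h1
        exact hg_ne_u h1
      have rz2 : ∀ a ∈ ({f, w} : Set B), ∀ c ∈ ({f, w} : Set B),
          a * c = c := by
        intro a ha c hc
        simp only [Set.mem_insert_iff, Set.mem_singleton_iff] at ha hc
        rcases ha with ha | ha <;> rcases hc with hc | hc <;> rw [ha, hc]
        exacts [hband f, f_fw, hfef, hband w]
      obtain ⟨Θ₂, hΘf, hΘw⟩ := Stmt16Aux.swap2 hhom hf_ne_w rz2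
      have c1 : Θ₂ u * w = Θ₂ u := by
        have h := map_mul Θ₂ u f
        rw [f_uf, hΘf] at h
        exact h.symm
      have c2 : Θ₂ u * f = Θ₂ u := by
        have h := map_mul Θ₂ u w
        rw [f_uw, hΘw] at h
        exact h.symm
      have c3 : Θ₂ g * f = Θ₂ u := by
        have h := map_mul Θ₂ g w
        rw [f_gw, hΘw] at h
        exact h.symm
      have c4 : Θ₂ g * w = Θ₂ g := by
        have h := map_mul Θ₂ g f
        rw [f_gf, hΘf] at h
        exact h.symm
      have d1 : Θ₂ u * e = Θ₂ u := by
        have h := c1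
        rw [hw, ← mul_assoc, c2] at h
        exact h
      have d2 : Θ₂ g = Θ₂ u := by
        have h := c4
        rw [hw, ← mul_assoc, c3, d1] at h
        exact h.symm
      exact hg_ne_u (Θ₂.injective d2)
  -- apply the key claim to x and y, contradicting that they are not L-related
  have hux : u * x = u := key x hxbx hbxb hxe hex
  have huy : u * y = u := key y hyby hbyb hye hey
  have hxxu : x = x * u := by
    have h := (f_zuz x hxbx).symm
    rw [mul_assoc, hux] at h
    exact h
  have hyyu : y = y * u := by
    have h := (f_zuz y hyby).symm
    rw [mul_assoc, huy] at h
    exact h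
  have hxy : x * y = x := by rw [hxxu, mul_assoc, huy]
  have hyx : y * x = y := by rw [hyyu, mul_assoc, hux]
  exact hnotL ⟨hxy, hyx⟩
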